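/- Let ξ, η ∈ Q±* be freely irreducible words of length n following the same pattern. Then there exists a word w ∈ X*₍λ_n₎ such that D_{λ_n, w}(ξ) = η, where D denotes dual mappings of the automaton B and λ_n is the least index with r_{λ_n} > 2n. In other words, the group generated by restrictions to Q±ⁿ of the dual mappings D_{i,x} with i ≥ λ_n acts transitively on the set of freely irreducible words of length n with a given pattern. -/

import Mathlib

/-- The four states `a, b, a⁻¹, b⁻¹` of the automaton `B`. -/
inductive Qpm
  | a | b | ai | bi
  deriving DecidableEq

open Qpm

/-- The `r`-cycle `σ = (1,2,…,r)` on `{1,…,r}`. -/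
def csigma (r x : ℕ) : ℕ := if x = r then 1 else x + 1

/-- The inverse of the `r`-cycle `σ`. -/
def csigmaInv (r x : ℕ) : ℕ := if x = 1 then r else x - 1

/-- The transposition `τ = (1,2)`. -/
def ctau (x : ℕ) : ℕ := if x = 1 then 2 else if x = 2 then 1 else x

/-- The transition function of the automaton `B`: states are fixed on letters
other than 1,2; on letter 1 it swaps `a ↔ b`; on letter 2 it swaps `a⁻¹ ↔ b⁻¹`. -/
def phiB (x : ℕ) (q : Qpm) : Qpm :=
  if x = 1 then
    (match q with
     | a => b
     | b => a
     | q => q)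
  else if x = 2 then
    (match q with
     | ai => bi
     | bi => ai
     | q => q)
  else q

/-- The output function of `B`: `σᵢ` at `a`, `σᵢ⁻¹` at `a⁻¹`, `τ` at `b, b⁻¹`. -/
def psiB (ri : ℕ) (q : Qpm) (x : ℕ) : ℕ :=
  match q with
  | a => csigma ri x
  | ai => csigmaInv ri x
  | _ => ctau x

/-- The dual mapping `D_{i,x}` of the automaton `B` (over `Xᵢ = {1,…,rᵢ}`). -/
def dualB (r : ℕ → ℕ) (i : ℕ) : ℕ → List Qpm → List Qpm
  | _, [] => []
  | x, q :: qs => phiB x q :: dualB r i (psiB (r i) q x) qs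

/-- `D_{i,w}`, the composition of dual mappings of `B` along the word `w`. -/
def dualWB (r : ℕ → ℕ) : ℕ → List ℕ → List Qpm → List Qpm
  | _, [], ξ => ξ
  | i, x :: xs, ξ => dualWB r (i + 1) xs (dualB r i x ξ)

/-- The formal inverse of a state. -/
def qinv : Qpm → Qpm
  | a => ai
  | ai => a
  | b => bi
  | bi => b

/-- The swap `a ↔ b`, `a⁻¹ ↔ b⁻¹` (the tilde operation). -/
def til : Qpm → Qpm
  | a => b
  | b => a
  | ai => bi
  | bi => ai

/-- The pattern symbol of a state: `true` stands for `*`, `false` for `*⁻¹`. -/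
def patt : Qpm → Bool
  | a => true
  | b => true
  | _ => false

/-- A word over `Q±` is freely irreducible if no two consecutive letters are
mutually inverse. -/
def FreelyIrred (ξ : List Qpm) : Prop := List.Chain' (fun p q => q ≠ qinv p) ξ

/-- A word over the changing alphabet `Xᵢ = {1,…,rᵢ}`, starting at index `i`. -/
def ValidB (r : ℕ → ℕ) : ℕ → List ℕ → Prop
  | _, [] => True
  | i, x :: xs => x ∈ Set.Icc 1 (r i) ∧ ValidB r (i + 1) xs

/-! ### Abstract machine over ℤ -/

def atau (z : ℤ) : ℤ := if z = 1 then 2 else if z = 2 then 1 else z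

def apsi (q : Qpm) (z : ℤ) : ℤ :=
  match q with
  | a => z + 1
  | ai => z - 1
  | _ => atau z

def unpsi (q : Qpm) (z : ℤ) : ℤ :=
  match q with
  | a => z - 1
  | ai => z + 1
  | _ => atau z

def aphi (z : ℤ) (q : Qpm) : Qpm :=
  if z = 1 then
    (match q with
     | a => b
     | b => a
     | q => q)
  else if z = 2 then
    (match q with
     | ai => bi
     | bi => ai
     | q => q)
  else q

def adual : ℤ → List Qpm → List Qpm
  | _, [] => []
  | z, q :: qs => aphi z q :: adual (apsi q z) qs

def applyA (ms : List ℤ) (w : List Qpm) : List Qpm := ms.foldl (fun w z => adual z w) w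

/-- entry value -/
def vv (p : Bool) : ℤ := if p then 1 else 2
/-- the other low value -/
def BB (p : Bool) : ℤ := if p then 2 else 1

lemma apsi_unpsi (q : Qpm) (z : ℤ) : apsi q (unpsi q z) = z := by
  cases q <;> simp [apsi, unpsi, atau] <;> split_ifs <;> omega

lemma patt_aphi (z : ℤ) (q : Qpm) : patt (aphi z q) = patt q := by
  unfold aphi; split_ifs <;> cases q <;> rfl

lemma patt_til (q : Qpm) : patt (til q) = patt q := by cases q <;> rfl

lemma aphi_aphi (z : ℤ) (q : Qpm) : aphi z (aphi z q) = q := by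
  unfold aphi; split_ifs <;> cases q <;> rfl

lemma apsi_aphi (z : ℤ) (q : Qpm) : apsi (aphi z q) z = apsi q z := by
  unfold aphi; split_ifs with h1 h2 <;> cases q <;> simp [apsi, atau, *]

lemma aphi_vv (q : Qpm) : aphi (vv (patt q)) q = til q := by
  cases q <;> rfl

lemma aphi_ne (y : ℤ) (q : Qpm) (h : y ≠ vv (patt q)) : aphi y q = q := by
  unfold aphi; split_ifs with h1 h2 <;> cases q <;> simp_all [vv, patt]

lemma apsi_vv (q : Qpm) : apsi q (vv (patt q)) = BB (patt q) := by
  cases q <;> rfl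

lemma unpsi_eq_vv (q : Qpm) (z : ℤ) : unpsi q z = vv (patt q) ↔ z = BB (patt q) := by
  constructor
  · intro h
    have := apsi_unpsi q z
    rw [h, apsi_vv] at this; omega
  · intro h
    subst h
    cases q <;> simp [unpsi, vv, patt, BB, atau]

lemma adual_nil (z : ℤ) : adual z [] = [] := rfl
lemma adual_cons (z : ℤ) (q : Qpm) (qs : List Qpm) :
    adual z (q :: qs) = aphi z q :: adual (apsi q z) qs := rfl

lemma adual_length (z : ℤ) (w : List Qpm) : (adual z w).length = w.length := by
  induction w generalizing z with
  | nil => rfl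
  | cons q qs ih => simp [adual_cons, ih]

lemma adual_map_patt (z : ℤ) (w : List Qpm) : (adual z w).map patt = w.map patt := by
  induction w generalizing z with
  | nil => rfl
  | cons q qs ih => simp [adual_cons, ih, patt_aphi]

lemma adual_adual (z : ℤ) (w : List Qpm) : adual z (adual z w) = w := by
  induction w generalizing z with
  | nil => rfl
  | cons q qs ih =>
    rw [adual_cons, adual_cons, aphi_aphi, apsi_aphi, ih]

lemma applyA_nil (w : List Qpm) : applyA [] w = w := rfl
lemma applyA_cons (z : ℤ) (ms : List ℤ) (w : List Qpm) :
    applyA (z :: ms) w = applyA ms (adual z w) := rfl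
lemma applyA_append (ms₁ ms₂ : List ℤ) (w : List Qpm) :
    applyA (ms₁ ++ ms₂) w = applyA ms₂ (applyA ms₁ w) := by
  simp [applyA, List.foldl_append]

lemma applyA_reverse (ms : List ℤ) (w : List Qpm) :
    applyA ms.reverse (applyA ms w) = w := by
  induction ms generalizing w with
  | nil => rfl
  | cons z ms ih =>
    rw [List.reverse_cons, applyA_cons, applyA_append, ih, applyA_cons, applyA_nil, adual_adual]

lemma applyA_length (ms : List ℤ) (w : List Qpm) : (applyA ms w).length = w.length := by
  induction ms generalizing w with
  | nil => rfl
  | cons z ms ih => rw [applyA_cons, ih, adual_length]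

lemma applyA_map_patt (ms : List ℤ) (w : List Qpm) : (applyA ms w).map patt = w.map patt := by
  induction ms generalizing w with
  | nil => rfl
  | cons z ms ih => rw [applyA_cons, ih, adual_map_patt]
/-! ### Lifting through the head letter -/

def liftSeq : Qpm → List ℤ → List ℤ
  | _, [] => []
  | q, z :: zs => unpsi q z :: liftSeq (aphi (unpsi q z) q) zs

/-- toggle by parity -/
def tog (q : Qpm) (k : ℕ) : Qpm := if k % 2 = 0 then q else til q

lemma til_til (q : Qpm) : til (til q) = q := by cases q <;> rfl

lemma tog_succ (q : Qpm) (k : ℕ) : tog q (k + 1) = til (tog q k) := by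
  unfold tog
  rcases Nat.even_or_odd k with h | h
  · have h0 : k % 2 = 0 := Nat.even_iff.mp h
    have h1 : (k + 1) % 2 = 1 := by omega
    rw [if_pos h0, if_neg (by omega)]
  · have h0 : k % 2 = 1 := Nat.odd_iff.mp h
    have h1 : (k + 1) % 2 = 0 := by omega
    rw [if_pos h1, if_neg (by omega), til_til]

lemma tog_til (q : Qpm) (k : ℕ) : tog (til q) k = til (tog q k) := by
  unfold tog; split_ifs <;> simp [til_til]

lemma lift_spec (zs : List ℤ) (q : Qpm) (t : List Qpm) :
    applyA (liftSeq q zs) (q :: t) =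
      tog q (zs.count (BB (patt q))) :: applyA zs t := by
  induction zs generalizing q t with
  | nil => rfl
  | cons z zs ih =>
    rw [liftSeq, applyA_cons, adual_cons, apsi_unpsi, ih, applyA_cons]
    have hp : patt (aphi (unpsi q z) q) = patt q := patt_aphi _ _
    rw [hp]
    by_cases hz : z = BB (patt q)
    · have hv : unpsi q z = vv (patt q) := (unpsi_eq_vv q z).mpr hz
      rw [hv, aphi_vv, List.count_cons, if_pos (by exact beq_iff_eq.mpr hz), tog_succ, tog_til]
    · have hv : unpsi q z ≠ vv (patt q) := fun h => hz ((unpsi_eq_vv q z).mp h)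
      rw [aphi_ne _ _ hv, List.count_cons, if_neg (by simp [hz]), Nat.add_zero]

lemma head_spec (zs : List ℤ) (s : Qpm) (t : List Qpm) :
    ∃ t', applyA zs (s :: t) = tog s (zs.count (vv (patt s))) :: t' := by
  induction zs generalizing s t with
  | nil => exact ⟨t, rfl⟩
  | cons z zs ih =>
    rw [applyA_cons, adual_cons]
    by_cases hz : z = vv (patt s)
    · subst hz
      rw [aphi_vv]
      obtain ⟨t', ht'⟩ := ih (til s) (adual (apsi s (vv (patt s))) t)
      refine ⟨t', ?_⟩
      rw [ht', List.count_cons, patt_til, if_pos (by simp), tog_succ, tog_til]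
    · rw [aphi_ne _ _ hz]
      obtain ⟨t', ht'⟩ := ih s (adual (apsi s z) t)
      refine ⟨t', ?_⟩
      rw [ht', List.count_cons, if_neg (by simp [hz]), Nat.add_zero]
/-! ### The fixed word `w*` and the parity gadget -/

def wletter (p pb : Bool) : Qpm :=
  if p then (if pb then a else bi) else (if pb then b else ai)

def wstar (p : Bool) (ps : List Bool) : List Qpm := ps.map (wletter p)

lemma wstar_cons (p pb : Bool) (ps : List Bool) :
    wstar p (pb :: ps) = wletter p pb :: wstar p ps := rfl

lemma wstar_map_patt (p : Bool) (ps : List Bool) : (wstar p ps).map patt = ps := by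
  unfold wstar
  rw [List.map_map]
  have : (patt ∘ wletter p) = id := by funext pb; cases p <;> cases pb <;> rfl
  rw [this, List.map_id]

lemma wstar_irred (p : Bool) (ps : List Bool) : FreelyIrred (wstar p ps) := by
  induction ps with
  | nil => exact List.isChain_nil
  | cons x xs ih =>
    cases xs with
    | nil => exact List.isChain_singleton _
    | cons y ys =>
      rw [wstar_cons, wstar_cons, FreelyIrred, List.Chain', List.isChain_cons_cons]
      refine ⟨?_, ih⟩
      cases p <;> cases x <;> cases y <;> simp [wletter, qinv]

lemma adual_high (ps : List Bool) (z : ℤ) (hz : 3 ≤ z) :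
    adual z (wstar true ps) = wstar true ps := by
  induction ps generalizing z with
  | nil => rfl
  | cons pb ps ih =>
    rw [wstar_cons, adual_cons,
      aphi_ne _ _ (by cases pb <;> simp [wletter, vv, patt] <;> omega)]
    congr 1
    cases pb
    · rw [show apsi (wletter true false) z = z by
        simp [wletter, apsi, atau]; split_ifs <;> omega]
      exact ih z hz
    · rw [show apsi (wletter true true) z = z + 1 by simp [wletter, apsi]]
      exact ih (z+1) (by omega)

lemma adual_low (ps : List Bool) (z : ℤ) (hz : z ≤ 0) :
    adual z (wstar false ps) = wstar false ps := by
  induction ps generalizing z with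
  | nil => rfl
  | cons pb ps ih =>
    rw [wstar_cons, adual_cons,
      aphi_ne _ _ (by cases pb <;> simp [wletter, vv, patt] <;> omega)]
    congr 1
    cases pb
    · rw [show apsi (wletter false false) z = z - 1 by simp [wletter, apsi]]
      exact ih (z-1) (by omega)
    · rw [show apsi (wletter false true) z = z by
        simp [wletter, apsi, atau]; split_ifs <;> omega]
      exact ih z hz

lemma wstar_fixed (p : Bool) (ps : List Bool) :
    adual (BB p) (wstar p (p :: ps)) = wstar p (p :: ps) := by
  cases p
  · rw [wstar_cons, show (BB false) = 1 from rfl, adual_cons,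
      aphi_ne _ _ (by simp [wletter, vv, patt]),
      show apsi (wletter false false) 1 = 0 by simp [wletter, apsi]]
    rw [adual_low ps 0 le_rfl]
  · rw [wstar_cons, show (BB true) = 2 from rfl, adual_cons,
      aphi_ne _ _ (by simp [wletter, vv, patt]),
      show apsi (wletter true true) 2 = 3 by simp [wletter, apsi]]
    rw [adual_high ps 3 le_rfl]

/-! ### bounds -/

lemma natAbs_atau (z : ℤ) : (atau z).natAbs ≤ z.natAbs + 1 := by
  unfold atau; split_ifs <;> omega

lemma natAbs_unpsi (q : Qpm) (z : ℤ) : (unpsi q z).natAbs ≤ z.natAbs + 1 := by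
  cases q <;> simp [unpsi] <;> first | omega | exact natAbs_atau z

lemma liftSeq_bound (zs : List ℤ) (q : Qpm) (K : ℕ) (h : ∀ z ∈ zs, z.natAbs ≤ K) :
    ∀ y ∈ liftSeq q zs, y.natAbs ≤ K + 1 := by
  induction zs generalizing q with
  | nil => intro y hy; cases hy
  | cons z zs ih =>
    intro y hy
    rw [liftSeq, List.mem_cons] at hy
    rcases hy with hy | hy
    · subst hy
      exact le_trans (natAbs_unpsi q z) (by have := h z (by simp); omega)
    · exact ih _ (fun w hw => h w (by simp [hw])) y hy

/-! ### Qpm case facts -/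

lemma same_patt_cases (x y : Qpm) (h : patt x = patt y) : y = x ∨ y = til x := by
  cases x <;> cases y <;> simp_all [patt, til]

lemma opp_patt_forced (x y : Qpm) (hp : patt x ≠ patt y) (hi : y ≠ qinv x) :
    y = til (qinv x) := by
  cases x <;> cases y <;> simp_all [patt, til, qinv]
/-! ### more Qpm helpers -/

lemma qinv_qinv (q : Qpm) : qinv (qinv q) = q := by cases q <;> rfl

lemma til_inj {x y : Qpm} (h : til x = til y) : x = y := by
  have := congrArg til h; rwa [til_til, til_til] at this

lemma qinv_inj {x y : Qpm} (h : qinv x = qinv y) : x = y := by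
  have := congrArg qinv h; rwa [qinv_qinv, qinv_qinv] at this

lemma qinv_til_qinv (q : Qpm) : qinv (til (qinv q)) = til q := by cases q <;> rfl

lemma tog_cases (q : Qpm) (k : ℕ) : tog q k = q ∨ tog q k = til q := by
  unfold tog; split_ifs
  · exact Or.inl rfl
  · exact Or.inr rfl

lemma tog_add_odd (q : Qpm) (m k : ℕ) (hk : k % 2 = 1) : tog q (m + k) = til (tog q m) := by
  unfold tog
  split_ifs with h1 h2 h2
  · omega
  · rw [til_til]
  · rfl
  · omega

/-! ### The main abstract transitivity theorem -/

theorem mainA : ∀ (n : ℕ) (ξ η : List Qpm), ξ.length = n → η.length = n →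
    FreelyIrred ξ → FreelyIrred η → ξ.map patt = η.map patt →
    ∃ ms : List ℤ, (∀ z ∈ ms, z.natAbs ≤ n + 2) ∧ applyA ms ξ = η := by
  intro n
  induction n with
  | zero =>
    intro ξ η hξ hη _ _ _
    rw [List.length_eq_zero_iff] at hξ hη
    subst hξ; subst hη
    exact ⟨[], by simp, rfl⟩
  | succ n ih =>
    intro ξ η hξl hηl hFIξ hFIη hmap
    cases ξ with
    | nil => simp at hξl
    | cons q ξ' =>
    cases η with
    | nil => simp at hηl
    | cons q' η' =>
    have hpq : patt q = patt q' := by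
      simpa using congrArg (fun l => l.head? ) hmap
    have hmap' : ξ'.map patt = η'.map patt := by
      simpa using congrArg (fun l => l.tail) hmap
    have hlξ' : ξ'.length = n := by simpa using hξl
    have hlη' : η'.length = n := by simpa using hηl
    have hFIξ' : FreelyIrred ξ' := hFIξ.tail
    have hFIη' : FreelyIrred η' := hFIη.tail
    cases ξ' with
    | nil =>
      -- length 1
      have hη'nil : η' = [] := List.length_eq_zero_iff.mp (by simp at hlξ' hlη'; omega)
      subst hη'nil
      rcases same_patt_cases q q' hpq with h | h
      · exact ⟨[], by simp, by rw [h]; rfl⟩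
      · refine ⟨[vv (patt q)], ?_, ?_⟩
        · intro z hz
          simp at hz; subst hz
          cases (patt q) <;> simp [vv]
        · rw [applyA_cons, applyA_nil, adual_cons, adual_nil, aphi_vv, h]
    | cons s rest =>
    cases η' with
    | nil => exfalso; simp at hlη' hlξ'; omega
    | cons s' rest' =>
    obtain ⟨ms', hb', ha'⟩ := ih (s :: rest) (s' :: rest') hlξ' hlη' hFIξ' hFIη' hmap'
    by_cases hE : tog q (ms'.count (BB (patt q))) = q'
    · refine ⟨liftSeq q ms', liftSeq_bound ms' q (n + 2) hb', ?_⟩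
      rw [lift_spec, ha', hE]
    · -- mismatch case: first show patt s = patt q
      have hss' : patt s = patt s' := by
        simpa using congrArg (fun l => l.head?) hmap'
      have hpp : patt s = patt q := by
        by_contra hne
        obtain ⟨t', ht'⟩ := head_spec ms' s rest
        rw [ha'] at ht'
        have hs' : s' = tog s (ms'.count (vv (patt s))) := by
          simpa using congrArg (fun l => l.head?) ht'
        have hvB : vv (patt s) = BB (patt q) := by
          cases hq0 : patt q <;> cases hs0 : patt s <;>
            first
              | rfl
              | (exact absurd (hs0.trans hq0.symm) hne)
        rw [hvB] at hs'
        have hsf : s = til (qinv q) :=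
          opp_patt_forced q s (fun h => hne h.symm) (List.isChain_cons_cons.mp hFIξ).1
        have hs'f : s' = til (qinv q') := by
          refine opp_patt_forced q' s' ?_ (List.isChain_cons_cons.mp hFIη).1
          rw [← hpq, ← hss']; exact fun h => hne h.symm
        by_cases hpar : (ms'.count (BB (patt q))) % 2 = 0
        · have h1 : tog q (ms'.count (BB (patt q))) = q := by unfold tog; rw [if_pos hpar]
          have h2 : s' = s := by rw [hs']; unfold tog; rw [if_pos hpar]
          have : q' = q := qinv_inj (til_inj (by rw [← hsf, ← hs'f, h2]))
          rw [h1] at hE; exact hE this.symm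
        · have h1 : tog q (ms'.count (BB (patt q))) = til q := by unfold tog; rw [if_neg hpar]
          have h2 : s' = til s := by rw [hs']; unfold tog; rw [if_neg hpar]
          have h3 : til (qinv q') = til (til (qinv q)) := by rw [← hsf, ← hs'f, h2]
          have : q' = til q := by
            have h4 : qinv q' = til (qinv q) := til_inj h3
            have := congrArg qinv h4
            rwa [qinv_qinv, qinv_til_qinv] at this
          rw [h1] at hE; exact hE this.symm
      -- gadget construction
      have hq' : q' = til (tog q (ms'.count (BB (patt q)))) := by
        rcases tog_cases q (ms'.count (BB (patt q))) with h2 | h2 <;> rw [h2] at hE ⊢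
        · rcases same_patt_cases q q' hpq with h | h
          · exact absurd h.symm hE
          · exact h
        · rw [til_til]
          rcases same_patt_cases q q' hpq with h | h
          · exact h
          · exact absurd h.symm hE
      have hps' : patt s' = patt q := by rw [← hss', hpp]
      set wst := wstar (patt q) ((s' :: rest').map patt) with hwst
      have hwlen : wst.length = n := by
        rw [hwst, wstar, List.length_map, List.length_map, hlη']
      obtain ⟨P, hPb, hPa⟩ := ih (s' :: rest') wst hlη' hwlen hFIη' (wstar_irred _ _)
        (by rw [hwst, wstar_map_patt])
      have hfix : adual (BB (patt q)) wst = wst := by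
        rw [hwst]
        have : (s' :: rest').map patt = patt q :: rest'.map patt := by
          simp [hps']
        rw [this]
        exact wstar_fixed (patt q) (rest'.map patt)
      set ms'' := ms' ++ (P ++ BB (patt q) :: P.reverse) with hms''
      have happ : applyA ms'' (s :: rest) = s' :: rest' := by
        rw [hms'', applyA_append, ha', applyA_append, applyA_cons, hPa, hfix, ← hPa,
          applyA_reverse]
      have hcnt : ms''.count (BB (patt q)) =
          ms'.count (BB (patt q)) + (2 * P.count (BB (patt q)) + 1) := by
        rw [hms'', List.count_append, List.count_append, List.count_cons,
          List.count_reverse, if_pos (by simp)]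
        ring
      refine ⟨liftSeq q ms'', ?_, ?_⟩
      · apply liftSeq_bound _ _ (n + 2)
        intro z hz
        rw [hms''] at hz
        simp only [List.mem_append, List.mem_cons, List.mem_reverse] at hz
        rcases hz with hz | hz | hz | hz
        · exact hb' z hz
        · exact hPb z hz
        · subst hz; cases (patt q) <;> simp [BB]
        · exact hPb z hz
      · rw [lift_spec, happ, hcnt, tog_add_odd _ _ _ (by omega), ← hq']
/-! ### Realization: the abstract machine simulates `dualB` -/

def rep (R : ℕ) (z : ℤ) : ℕ := if 1 ≤ z then z.toNat else R - (-z).toNat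

lemma rep_bounds (R : ℕ) (z : ℤ) (h : z.natAbs + 3 ≤ R) : 1 ≤ rep R z ∧ rep R z ≤ R := by
  unfold rep; split_ifs <;> omega

lemma natAbs_apsi (q : Qpm) (z : ℤ) : (apsi q z).natAbs ≤ z.natAbs + 1 := by
  cases q <;> simp [apsi] <;> first | omega | exact natAbs_atau z

lemma sim (r : ℕ → ℕ) (i : ℕ) :
    ∀ (w : List Qpm) (z : ℤ), z.natAbs + w.length + 3 ≤ r i →
      dualB r i (rep (r i) z) w = adual z w := by
  intro w
  induction w with
  | nil => intro z _; rfl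
  | cons q qs ih =>
    intro z hb
    simp only [List.length_cons] at hb
    rw [dualB, adual_cons]
    have hphi : phiB (rep (r i) z) q = aphi z q := by
      by_cases h1 : z = 1
      · subst h1; rw [show rep (r i) 1 = 1 from by unfold rep; simp]
        cases q <;> rfl
      · by_cases h2 : z = 2
        · subst h2; rw [show rep (r i) 2 = 2 from by unfold rep; split_ifs <;> omega]
          cases q <;> rfl
        · have hne : rep (r i) z ≠ 1 ∧ rep (r i) z ≠ 2 := by unfold rep; split_ifs <;> omega
          unfold phiB aphi
          rw [if_neg hne.1, if_neg hne.2, if_neg (by omega), if_neg (by omega)]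
    rw [hphi]
    congr 1
    have hpsi : psiB (r i) q (rep (r i) z) = rep (r i) (apsi q z) := by
      cases q
      · show csigma (r i) (rep (r i) z) = rep (r i) (z + 1)
        unfold csigma rep; split_ifs <;> omega
      · show ctau (rep (r i) z) = rep (r i) (atau z)
        unfold ctau atau rep; split_ifs <;> omega
      · show csigmaInv (r i) (rep (r i) z) = rep (r i) (z - 1)
        unfold csigmaInv rep; split_ifs <;> omega
      · show ctau (rep (r i) z) = rep (r i) (atau z)
        unfold ctau atau rep; split_ifs <;> omega
    rw [hpsi]
    exact ih (apsi q z) (by have := natAbs_apsi q z; omega)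

/-! ### padding with identity letters -/

lemma dualB_pad (r : ℕ → ℕ) (i : ℕ) :
    ∀ (w : List Qpm) (x : ℕ), w.length + 2 ≤ x → x + w.length ≤ r i + 1 →
      dualB r i x w = w := by
  intro w
  induction w with
  | nil => intro x _ _; rfl
  | cons q qs ih =>
    intro x h1 h2
    simp only [List.length_cons] at h1 h2
    rw [dualB]
    have hphi : phiB x q = q := by unfold phiB; rw [if_neg (by omega), if_neg (by omega)]
    rw [hphi]
    congr 1
    cases qs with
    | nil => rfl
    | cons p ps =>
      simp only [List.length_cons] at *
      apply ih
      · cases q <;> unfold psiB csigma csigmaInv ctau <;> split_ifs <;>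
          simp only [List.length_cons] <;> omega
      · cases q <;> unfold psiB csigma csigmaInv ctau <;> split_ifs <;>
          simp only [List.length_cons] <;> omega

/-! ### dualWB and ValidB structural lemmas -/

lemma dualWB_append (r : ℕ → ℕ) :
    ∀ (u v : List ℕ) (i : ℕ) (ξ : List Qpm),
      dualWB r i (u ++ v) ξ = dualWB r (i + u.length) v (dualWB r i u ξ) := by
  intro u
  induction u with
  | nil => intro v i ξ; simp [dualWB]
  | cons x u ih =>
    intro v i ξ
    rw [List.cons_append, dualWB, dualWB, ih]
    congr 1
    simp; omega

lemma ValidB_append (r : ℕ → ℕ) :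
    ∀ (u v : List ℕ) (i : ℕ), ValidB r i u → ValidB r (i + u.length) v →
      ValidB r i (u ++ v) := by
  intro u
  induction u with
  | nil => intro v i _ h; simpa using h
  | cons x u ih =>
    intro v i hu hv
    rw [List.cons_append, ValidB]
    refine ⟨hu.1, ih v (i+1) hu.2 ?_⟩
    have : i + 1 + u.length = i + (u.length + 1) := by omega
    rw [this]
    simpa using hv

lemma pad_spec (r : ℕ → ℕ) (n : ℕ) (hn : 1 ≤ n)
    (ξ : List Qpm) (hξ : ξ.length = n) :
    ∀ (m i : ℕ), (∀ t, i ≤ t → 2*n+1 ≤ r t) →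
      dualWB r i (List.replicate m (n+2)) ξ = ξ ∧ ValidB r i (List.replicate m (n+2)) := by
  intro m
  induction m with
  | zero => intro i _; exact ⟨rfl, trivial⟩
  | succ m ih =>
    intro i hr
    rw [List.replicate_succ, dualWB, ValidB]
    have hri : 2*n+1 ≤ r i := hr i le_rfl
    have hpad : dualB r i (n+2) ξ = ξ := dualB_pad r i ξ (n+2) (by omega) (by omega)
    rw [hpad]
    obtain ⟨h1, h2⟩ := ih (i+1) (fun t ht => hr t (by omega))
    exact ⟨h1, ⟨by constructor <;> omega, h2⟩⟩

/-! ### realizing an abstract move sequence -/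

def conc (r : ℕ → ℕ) : ℕ → List ℤ → List ℕ
  | _, [] => []
  | i, z :: zs => rep (r i) z :: conc r (i+1) zs

lemma conc_spec (r : ℕ → ℕ) (n K : ℕ) :
    ∀ (ms : List ℤ) (i : ℕ) (ξ : List Qpm), ξ.length = n →
      (∀ z ∈ ms, z.natAbs ≤ K) → (∀ t, i ≤ t → K + n + 3 ≤ r t) →
      dualWB r i (conc r i ms) ξ = applyA ms ξ ∧ ValidB r i (conc r i ms) := by
  intro ms
  induction ms with
  | nil => intro i ξ _ _ _; exact ⟨rfl, trivial⟩
  | cons z zs ih =>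
    intro i ξ hξ hb hr
    rw [conc, dualWB, ValidB, applyA_cons]
    have hzb : z.natAbs ≤ K := hb z (by simp)
    have hri : K + n + 3 ≤ r i := hr i le_rfl
    have hsim : dualB r i (rep (r i) z) ξ = adual z ξ := sim r i ξ z (by omega)
    rw [hsim]
    obtain ⟨h1, h2⟩ := ih (i+1) (adual z ξ) (by rw [adual_length, hξ])
      (fun w hw => hb w (by simp [hw])) (fun t ht => hr t (by omega))
    refine ⟨h1, ?_, h2⟩
    have := rep_bounds (r i) z (by omega)
    constructor <;> omega
/-- the dual mappings of `B` starting at level `λ_n` act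
transitively on freely irreducible words of length `n` with a given pattern:
for freely irreducible `ξ, η` of length `n` with the same pattern there is a
word `w ∈ X*₍λ_n₎` with `D_{λ_n,w}(ξ) = η`. -/
theorem dual_action_transitive_on_irreducible_words
    (r : ℕ → ℕ) (hmono : Monotone r) (hge : ∀ i, 2 ≤ r i)
    (hunb : ∀ N, ∃ i, N < r i)
    (L : ℕ → ℕ) (hL : ∀ n, 2 * n < r (L n) ∧ ∀ j < L n, r j ≤ 2 * n) :
    ∀ (n : ℕ) (ξ η : List Qpm), ξ.length = n → η.length = n →
      FreelyIrred ξ → FreelyIrred η → ξ.map patt = η.map patt →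
      ∃ w : List ℕ, ValidB r (L n) w ∧ dualWB r (L n) w ξ = η := by
  intro n ξ η hlξ hlη hFIξ hFIη hmap
  cases n with
  | zero =>
    rw [List.length_eq_zero_iff] at hlξ hlη
    subst hlξ; subst hlη
    exact ⟨[], trivial, rfl⟩
  | succ m =>
    obtain ⟨ms, hbms, hams⟩ := mainA (m+1) ξ η hlξ hlη hFIξ hFIη hmap
    obtain ⟨i₁, hi₁⟩ := hunb (2*(m+1)+4)
    set i₀ := max (L (m+1)) i₁ with hi₀
    have hLle : L (m+1) ≤ i₀ := le_max_left _ _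
    have hrL : ∀ t, L (m+1) ≤ t → 2*(m+1)+1 ≤ r t := by
      intro t ht
      have h1 := (hL (m+1)).1
      have h2 := hmono ht
      omega
    have hrI : ∀ t, i₀ ≤ t → ((m+1)+2) + (m+1) + 3 ≤ r t := by
      intro t ht
      have h2 := hmono (le_trans (le_max_right (L (m+1)) i₁) ht)
      omega
    obtain ⟨hpadd, hpadv⟩ := pad_spec r (m+1) (by omega) ξ hlξ (i₀ - L (m+1)) (L (m+1)) hrL
    obtain ⟨hconcd, hconcv⟩ := conc_spec r (m+1) ((m+1)+2) ms i₀ ξ hlξ hbms hrI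
    have hidx : L (m+1) + (i₀ - L (m+1)) = i₀ := by omega
    refine ⟨List.replicate (i₀ - L (m+1)) ((m+1)+2) ++ conc r i₀ ms, ?_, ?_⟩
    · apply ValidB_append
      · exact hpadv
      · rw [List.length_replicate, hidx]
        exact hconcv
    · rw [dualWB_append, List.length_replicate, hpadd, hidx, hconcd, hams]
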